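/- Let γ : ℝ → ℝ be C³ with γ(0) = γ'(0) = 0, γ'' > 0 on (0,∞), lim_{t→0⁺} γ'(t)/γ''(t) = 0, and C₁ ≤ (γ'/γ'')'(t) ≤ C₂ on (0,∞) with 0 < C₁ ≤ C₂. Then for every t ∈ (0,∞), 1/(2C₂) ≤ t·γ''(t)/γ'(t) ≤ 2/C₁. -/

import Mathlib

open Set Filter

theorem stmt1 (γ : ℝ → ℝ) (C₁ C₂ : ℝ)
    (hγ : ContDiff ℝ 3 γ)
    (h0 : γ 0 = 0) (h0' : deriv γ 0 = 0)
    (hpos : ∀ t ∈ Ioi (0:ℝ), 0 < deriv (deriv γ) t)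
    (hlim : Tendsto (fun t => deriv γ t / deriv (deriv γ) t)
      (nhdsWithin 0 (Ioi 0)) (nhds 0))
    (hC₁ : 0 < C₁) (hC₁₂ : C₁ ≤ C₂)
    (hbound : ∀ t ∈ Ioi (0:ℝ),
      C₁ ≤ deriv (fun s => deriv γ s / deriv (deriv γ) s) t ∧
      deriv (fun s => deriv γ s / deriv (deriv γ) s) t ≤ C₂) :
    ∀ t ∈ Ioi (0:ℝ),
      1 / (2 * C₂) ≤ t * deriv (deriv γ) t / deriv γ t ∧
      t * deriv (deriv γ) t / deriv γ t ≤ 2 / C₁ := by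
  have hC₂ : 0 < C₂ := lt_of_lt_of_le hC₁ hC₁₂
  set g : ℝ → ℝ := fun s => deriv γ s / deriv (deriv γ) s with hg
  -- regularity
  have hγ' : ContDiff ℝ ((2:ℕ)+1) γ := by exact_mod_cast hγ
  have hc2 : ContDiff ℝ 2 (deriv γ) := by
    exact_mod_cast (contDiff_succ_iff_deriv.mp hγ').2.2
  have hc2' : ContDiff ℝ ((1:ℕ)+1) (deriv γ) := by exact_mod_cast hc2
  have hc1 : ContDiff ℝ 1 (deriv (deriv γ)) := by
    exact_mod_cast (contDiff_succ_iff_deriv.mp hc2').2.2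
  have hd2 : Differentiable ℝ (deriv γ) := hc2.differentiable (by norm_num)
  have hd3 : Differentiable ℝ (deriv (deriv γ)) := hc1.differentiable one_ne_zero
  -- γ' > 0 on Ioi 0
  have hmono : StrictMonoOn (deriv γ) (Ici 0) := by
    apply strictMonoOn_of_deriv_pos (convex_Ici 0) hd2.continuous.continuousOn
    intro t ht
    rw [interior_Ici] at ht
    exact hpos t ht
  have hγ'pos : ∀ t ∈ Ioi (0:ℝ), 0 < deriv γ t := by
    intro t ht
    have := hmono (self_mem_Ici) (mem_Ici.mpr (le_of_lt (mem_Ioi.mp ht))) ht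
    rwa [h0'] at this
  -- g differentiable on Ioi 0
  have hgd : ∀ t ∈ Ioi (0:ℝ), DifferentiableAt ℝ g t := by
    intro t ht
    exact (hd2 t).div (hd3 t) (ne_of_gt (hpos t ht))
  -- key bounds: C₁ * t ≤ g t ≤ C₂ * t on Ioi 0
  have key : ∀ t ∈ Ioi (0:ℝ), C₁ * t ≤ g t ∧ g t ≤ C₂ * t := by
    intro t ht
    -- monotone auxiliary functions
    have hmono1 : MonotoneOn (fun s => g s - C₁ * s) (Ioi 0) := by
      apply monotoneOn_of_deriv_nonneg (convex_Ioi 0)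
      · exact ContinuousOn.sub (fun s hs => ((hgd s hs).continuousAt).continuousWithinAt)
          (by fun_prop)
      · intro s hs
        rw [interior_Ioi] at hs
        exact ((hgd s hs).sub (by fun_prop)).differentiableWithinAt
      · intro s hs
        rw [interior_Ioi] at hs
        rw [deriv_fun_sub (hgd s hs) (by fun_prop)]
        have hda : HasDerivAt (fun s => C₁ * s) C₁ s := by
          simpa using (hasDerivAt_id s).const_mul C₁
        rw [hda.deriv]
        linarith [(hbound s hs).1]
    have hmono2 : MonotoneOn (fun s => C₂ * s - g s) (Ioi 0) := by
      apply monotoneOn_of_deriv_nonneg (convex_Ioi 0)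
      · exact ContinuousOn.sub (by fun_prop)
          (fun s hs => ((hgd s hs).continuousAt).continuousWithinAt)
      · intro s hs
        rw [interior_Ioi] at hs
        exact ((differentiable_id.const_mul C₂).differentiableAt.sub (hgd s hs)).differentiableWithinAt
      · intro s hs
        rw [interior_Ioi] at hs
        rw [deriv_fun_sub (by fun_prop) (hgd s hs)]
        have hda : HasDerivAt (fun s => C₂ * s) C₂ s := by
          simpa using (hasDerivAt_id s).const_mul C₂
        rw [hda.deriv]
        linarith [(hbound s hs).2]
    -- limits as s → 0+
    have hlim1 : Tendsto (fun s => g s - C₁ * s) (nhdsWithin 0 (Ioi 0)) (nhds 0) := by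
      have : Tendsto (fun s : ℝ => C₁ * s) (nhdsWithin 0 (Ioi 0)) (nhds 0) := by
        have := (continuous_const.mul continuous_id (f := fun s : ℝ => C₁)).tendsto 0
        have h' : Tendsto (fun s : ℝ => C₁ * s) (nhds 0) (nhds (C₁ * 0)) := this
        simpa using h'.mono_left nhdsWithin_le_nhds
      simpa using hlim.sub this
    have hlim2 : Tendsto (fun s => C₂ * s - g s) (nhdsWithin 0 (Ioi 0)) (nhds 0) := by
      have : Tendsto (fun s : ℝ => C₂ * s) (nhdsWithin 0 (Ioi 0)) (nhds 0) := by
        have := (continuous_const.mul continuous_id (f := fun s : ℝ => C₂)).tendsto 0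
        have h' : Tendsto (fun s : ℝ => C₂ * s) (nhds 0) (nhds (C₂ * 0)) := this
        simpa using h'.mono_left nhdsWithin_le_nhds
      simpa using this.sub hlim
    have hev : ∀ᶠ s in nhdsWithin 0 (Ioi 0), s ∈ Ioo (0:ℝ) t :=
      Ioo_mem_nhdsGT ht
    have h1 : (0:ℝ) ≤ g t - C₁ * t := by
      refine le_of_tendsto hlim1 ?_
      filter_upwards [hev] with s hs
      exact hmono1 hs.1 ht (le_of_lt hs.2)
    have h2 : (0:ℝ) ≤ C₂ * t - g t := by
      refine le_of_tendsto hlim2 ?_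
      filter_upwards [hev] with s hs
      exact hmono2 hs.1 ht (le_of_lt hs.2)
    constructor <;> linarith
  -- conclude
  intro t ht
  have ht' : (0:ℝ) < t := ht
  have h2pos := hpos t ht
  have h1pos := hγ'pos t ht
  obtain ⟨hl, hr⟩ := key t ht
  have hgdef : g t = deriv γ t / deriv (deriv γ) t := rfl
  rw [hgdef] at hl hr
  have hl' : C₁ * t * deriv (deriv γ) t ≤ deriv γ t := (le_div_iff₀ h2pos).mp hl
  have hr' : deriv γ t ≤ C₂ * t * deriv (deriv γ) t := (div_le_iff₀ h2pos).mp hr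
  constructor
  · rw [div_le_div_iff₀ (by positivity) h1pos]
    nlinarith
  · rw [div_le_div_iff₀ h1pos hC₁]
    nlinarith
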